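/- For every k ≥ 1, the cycle C_ℓ with 3k ≤ ℓ ≤ 3k+2 is k-AT-free, and the cycle C_{3k} contains a (k−1)-asteroidal triple (for k ≥ 2). -/

import Mathlib

open SimpleGraph
open Fin.NatCast

lemma subval {n : ℕ} (a b : Fin n) :
    ((a-b).val + b.val = a.val ∨ (a-b).val + b.val = a.val + n) ∧ (a-b).val < n := by
  have ha := a.isLt; have hb := b.isLt
  rw [Fin.sub_def]
  simp only []
  rcases le_or_gt b.val a.val with h|h
  · have e : n - b.val + a.val = (a.val - b.val) + n := by omega
    rw [e, Nat.add_mod_right, Nat.mod_eq_of_lt (by omega)]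
    omega
  · rw [Nat.mod_eq_of_lt (by omega)]
    omega

lemma walk_lb {n : ℕ} {u v : Fin n} (p : (cycleGraph n).Walk u v) :
    (v - u).val ≤ p.length ∨ (u - v).val ≤ p.length := by
  induction p with
  | nil => rename_i w; obtain ⟨h1, h2⟩ := subval w w; left; omega
  | @cons u w v h q ih =>
    rw [cycleGraph_adj'] at h
    obtain ⟨h1, h2⟩ := subval v u
    obtain ⟨h3, h4⟩ := subval u v
    obtain ⟨h5, h6⟩ := subval v w
    obtain ⟨h7, h8⟩ := subval w v
    obtain ⟨h9, h10⟩ := subval u w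
    obtain ⟨h11, h12⟩ := subval w u
    have hu := u.isLt; have hv := v.isLt; have hw := w.isLt
    simp only [Walk.length_cons]
    omega

lemma walk_ub {n : ℕ} [NeZero n] (hn : 2 ≤ n) (u : Fin n) (m : ℕ) :
    ∃ p : (cycleGraph n).Walk u (u + (m : Fin n)), p.length = m ∧
      ∀ w ∈ p.support, ∃ i ≤ m, w = u + (i : Fin n) := by
  induction m with
  | zero =>
    refine ⟨Walk.nil.copy rfl (by simp), by simp, ?_⟩
    intro w hw
    rw [Walk.support_copy] at hw
    simp at hw
    exact ⟨0, le_refl 0, by simp [hw]⟩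
  | succ m ih =>
    obtain ⟨p, hl, hs⟩ := ih
    have hadj : (cycleGraph n).Adj (u + (m : Fin n)) (u + ((m+1 : ℕ) : Fin n)) := by
      rw [cycleGraph_adj']
      right
      have : u + ((m+1 : ℕ) : Fin n) - (u + (m : Fin n)) = 1 := by
        push_cast; abel
      rw [this]
      rw [Fin.val_one']
      exact Nat.mod_eq_of_lt (by omega)
    refine ⟨p.concat hadj, by rw [Walk.length_concat, hl], ?_⟩
    intro w hw
    rw [Walk.support_concat] at hw
    rw [List.mem_append] at hw
    rcases hw with hw | hw
    · obtain ⟨i, hi, he⟩ := hs w hw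
      exact ⟨i, by omega, he⟩
    · simp at hw
      exact ⟨m+1, le_refl _, by push_cast; exact hw⟩

lemma edist_ub {n : ℕ} [NeZero n] (hn : 2 ≤ n) (u v : Fin n) :
    (cycleGraph n).edist u v ≤ ((v - u).val : ℕ∞) := by
  obtain ⟨p, hl, -⟩ := walk_ub hn u (v - u).val
  have e : u + (((v - u).val : ℕ) : Fin n) = v := by
    rw [Fin.cast_val_eq_self]; abel
  have := edist_le (p.copy rfl e)
  rwa [Walk.length_copy, hl] at this

lemma edist_lb {n : ℕ} (u w : Fin n) (m : ℕ) (h1 : m ≤ (w - u).val)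
    (h2 : m ≤ (u - w).val) : (m : ℕ∞) ≤ (cycleGraph n).edist u w := by
  rw [edist_eq_sInf]
  refine le_sInf ?_
  rintro b ⟨q, rfl⟩
  simp only []
  rcases walk_lb q with h | h
  · exact_mod_cast h1.trans h
  · exact_mod_cast h2.trans h

/-- A `k`-asteroidal triple. -/
def IsKAT {V : Type*} (G : SimpleGraph V) (k : ℕ) (x y z : V) : Prop :=
  x ≠ y ∧ y ≠ z ∧ x ≠ z ∧
  (∃ p : G.Walk x y, p.IsPath ∧ ∀ w ∈ p.support, (k : ℕ∞) < G.edist z w) ∧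
  (∃ p : G.Walk x z, p.IsPath ∧ ∀ w ∈ p.support, (k : ℕ∞) < G.edist y w) ∧
  (∃ p : G.Walk y z, p.IsPath ∧ ∀ w ∈ p.support, (k : ℕ∞) < G.edist x w)

/-- For every `k ≥ 1`, the cycle `C_ℓ` with `3k ≤ ℓ ≤ 3k+2` is `k`-AT-free, and for
`k ≥ 2` the cycle `C_{3k}` contains a `(k-1)`-asteroidal triple. -/
theorem cycle_kAT (k : ℕ) (hk : 1 ≤ k) :
    (∀ ℓ : ℕ, 3 * k ≤ ℓ → ℓ ≤ 3 * k + 2 →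
      ∀ x y z : Fin ℓ, ¬ IsKAT (cycleGraph ℓ) k x y z) ∧
    (2 ≤ k → ∃ x y z : Fin (3 * k), IsKAT (cycleGraph (3 * k)) (k - 1) x y z) := by
  constructor
  · intro ℓ hl1 hl2 x y z hAT
    haveI : NeZero ℓ := ⟨by omega⟩
    have hn : 2 ≤ ℓ := by omega
    obtain ⟨hxy, hyz, hxz, ⟨p1, hp1, hd1⟩, ⟨p2, hp2, hd2⟩, ⟨p3, hp3, hd3⟩⟩ := hAT
    -- pairwise edist bounds
    have key : ∀ a b : Fin ℓ, (k : ℕ∞) < (cycleGraph ℓ).edist a b →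
        k < (b - a).val ∧ k < (a - b).val := by
      intro a b h
      constructor
      · exact_mod_cast h.trans_le (edist_ub hn a b)
      · have := (h.trans_le (edist_ub hn a b))
        have h2 : (cycleGraph ℓ).edist a b ≤ ((a - b).val : ℕ∞) := by
          rw [edist_comm]; exact edist_ub hn b a
        exact_mod_cast h.trans_le h2
    obtain ⟨a1, a2⟩ := key z x (hd1 x p1.start_mem_support)
    obtain ⟨b1, b2⟩ := key z y (hd1 y p1.end_mem_support)
    obtain ⟨c1, c2⟩ := key y x (hd2 x p2.start_mem_support)
    obtain ⟨s1, s2⟩ := subval x z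
    obtain ⟨s3, s4⟩ := subval z x
    obtain ⟨s5, s6⟩ := subval y z
    obtain ⟨s7, s8⟩ := subval z y
    obtain ⟨s9, s10⟩ := subval x y
    obtain ⟨s11, s12⟩ := subval y x
    have hx := x.isLt; have hy := y.isLt; have hz := z.isLt
    omega
  · intro hk2
    set n := 3 * k with hn3
    haveI : NeZero n := ⟨by omega⟩
    have hn : 2 ≤ n := by omega
    set x : Fin n := ⟨0, by omega⟩ with hxdef
    set y : Fin n := ⟨k, by omega⟩ with hydef
    set z : Fin n := ⟨2 * k, by omega⟩ with hzdef
    have hxv : x.val = 0 := rfl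
    have hyv : y.val = k := rfl
    have hzv : z.val = 2 * k := rfl
    have hklt : (k - 1 : ℕ∞) < (k : ℕ∞) := by
      exact_mod_cast Nat.sub_lt (by omega) one_pos
    -- distance fact
    have dist_chk : ∀ (u w : Fin n), k ≤ (w - u).val → k ≤ (u - w).val →
        ((k - 1 : ℕ) : ℕ∞) < (cycleGraph n).edist u w := fun u w h1 h2 =>
      lt_of_lt_of_le (by exact_mod_cast hklt) (edist_lb u w k h1 h2)
    refine ⟨x, y, z, ?_, ?_, ?_, ?_, ?_, ?_⟩
    · intro h; rw [Fin.ext_iff, hxv, hyv] at h; omega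
    · intro h; rw [Fin.ext_iff, hyv, hzv] at h; omega
    · intro h; rw [Fin.ext_iff, hxv, hzv] at h; omega
    · -- path x to y, vertices i for i ≤ k, far from z
      obtain ⟨p, hl, hs⟩ := walk_ub hn x k
      have e : x + ((k : ℕ) : Fin n) = y := by
        rw [Fin.ext_iff, Fin.add_def, hxv, hyv, Fin.val_cast_of_lt (by omega)]
        simp only [Fin.val_mk]
        rw [Nat.mod_eq_of_lt (by omega)]
        omega
      refine ⟨(p.copy rfl e).bypass, Walk.bypass_isPath _, ?_⟩
      intro w hw
      have hw' := Walk.support_bypass_subset _ hw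
      rw [Walk.support_copy] at hw'
      obtain ⟨i, hi, rfl⟩ := hs w hw'
      have hwv : (x + (i : Fin n)).val = i := by
        rw [Fin.add_def, hxv, Fin.val_cast_of_lt (by omega)]
        simp only [Fin.val_mk]
        rw [Nat.mod_eq_of_lt (by omega)]
        omega
      obtain ⟨s1, s2⟩ := subval (x + (i : Fin n)) z
      obtain ⟨s3, s4⟩ := subval z (x + (i : Fin n))
      exact dist_chk z _ (by omega) (by omega)
    · -- path x to z, vertices 2k + i going backwards, far from y
      obtain ⟨p, hl, hs⟩ := walk_ub hn z k
      have e : z + ((k : ℕ) : Fin n) = x := by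
        rw [Fin.ext_iff, Fin.add_def, hzv, hxv, Fin.val_cast_of_lt (by omega)]
        simp only [Fin.val_mk]
        rw [show 2 * k + k = n from by omega, Nat.mod_self]
      refine ⟨((p.copy rfl e).reverse).bypass, Walk.bypass_isPath _, ?_⟩
      intro w hw
      have hw' := Walk.support_bypass_subset _ hw
      rw [Walk.support_reverse, List.mem_reverse, Walk.support_copy] at hw'
      obtain ⟨i, hi, rfl⟩ := hs w hw'
      rcases eq_or_lt_of_le hi with hik | hik
      · have hwv : (z + (i : Fin n)).val = 0 := by
          rw [Fin.add_def, hzv, Fin.val_cast_of_lt (by omega), hik]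
          simp only [Fin.val_mk]
          rw [show 2 * k + k = n from by omega, Nat.mod_self]
        obtain ⟨s1, s2⟩ := subval (z + (i : Fin n)) y
        obtain ⟨s3, s4⟩ := subval y (z + (i : Fin n))
        exact dist_chk y _ (by omega) (by omega)
      · have hwv : (z + (i : Fin n)).val = 2 * k + i := by
          rw [Fin.add_def, hzv, Fin.val_cast_of_lt (by omega)]
          simp only [Fin.val_mk]
          rw [Nat.mod_eq_of_lt (by omega)]
        obtain ⟨s1, s2⟩ := subval (z + (i : Fin n)) y
        obtain ⟨s3, s4⟩ := subval y (z + (i : Fin n))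
        exact dist_chk y _ (by omega) (by omega)
    · -- path y to z, vertices k + i, far from x
      obtain ⟨p, hl, hs⟩ := walk_ub hn y k
      have e : y + ((k : ℕ) : Fin n) = z := by
        rw [Fin.ext_iff, Fin.add_def, hyv, hzv, Fin.val_cast_of_lt (by omega)]
        simp only [Fin.val_mk]
        rw [Nat.mod_eq_of_lt (by omega)]
        omega
      refine ⟨(p.copy rfl e).bypass, Walk.bypass_isPath _, ?_⟩
      intro w hw
      have hw' := Walk.support_bypass_subset _ hw
      rw [Walk.support_copy] at hw'
      obtain ⟨i, hi, rfl⟩ := hs w hw'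
      have hwv : (y + (i : Fin n)).val = k + i := by
        rw [Fin.add_def, hyv, Fin.val_cast_of_lt (by omega)]
        simp only [Fin.val_mk]
        rw [Nat.mod_eq_of_lt (by omega)]
      obtain ⟨s1, s2⟩ := subval (y + (i : Fin n)) x
      obtain ⟨s3, s4⟩ := subval x (y + (i : Fin n))
      exact dist_chk x _ (by omega) (by omega)
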